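/- Let B be the union of all su(2) blocks for ψ and let b be the number of qubits in B. Then dim_ℝ(K_ψ ∩ ḡ_B) ≤ n − b. -/

import Mathlib

open scoped Matrix

noncomputable section

/-- The `n`-qubit Hilbert space `(ℂ²)^{⊗n}`, realized as functions `(Fin n → Fin 2) → ℂ`. -/
abbrev QState (n : ℕ) := (Fin n → Fin 2) → ℂ

/-- The ambient real vector space `ℝ × (Fin n → M₂(ℂ))` containing `u(1) ⊕ su(2)^n`. -/
abbrev GV (n : ℕ) := ℝ × (Fin n → Matrix (Fin 2) (Fin 2) ℂ)

/-- `su(2)`: traceless skew-Hermitian `2 × 2` complex matrices, as a real subspace. -/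
def su2 : Submodule ℝ (Matrix (Fin 2) (Fin 2) ℂ) where
  carrier := {X | Xᴴ = -X ∧ X.trace = 0}
  add_mem' := by
    rintro X Y ⟨hX1, hX2⟩ ⟨hY1, hY2⟩
    exact ⟨by rw [Matrix.conjTranspose_add, hX1, hY1, neg_add],
           by rw [Matrix.trace_add, hX2, hY2, add_zero]⟩
  zero_mem' := ⟨by simp, by simp⟩
  smul_mem' := by
    rintro r X ⟨hX1, hX2⟩
    exact ⟨by rw [Matrix.conjTranspose_smul, hX1, star_trivial, smul_neg],
           by rw [Matrix.trace_smul, hX2, smul_zero]⟩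

/-- The Lie algebra `g = u(1) ⊕ su(2)^n` as a real subspace of `GV n`. -/
def gSub (n : ℕ) : Submodule ℝ (GV n) :=
  (⊤ : Submodule ℝ ℝ).prod (Submodule.pi Set.univ fun _ => su2)

/-- `g_S`: elements `(0, X)` of `g` with `X j = 0` for `j ∉ S`. -/
def gS {n : ℕ} (S : Set (Fin n)) : Submodule ℝ (GV n) :=
  (⊥ : Submodule ℝ ℝ).prod (Submodule.pi Set.univ fun j =>
    letI := Classical.dec (j ∈ S)
    if j ∈ S then su2 else ⊥)

/-- `ḡ_S`: elements `(t, X)` of `g` with `X j = 0` for `j ∈ S`. -/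
def gBar {n : ℕ} (S : Set (Fin n)) : Submodule ℝ (GV n) :=
  (⊤ : Submodule ℝ ℝ).prod (Submodule.pi Set.univ fun j =>
    letI := Classical.dec (j ∈ S)
    if j ∈ S then (⊥ : Submodule ℝ (Matrix (Fin 2) (Fin 2) ℂ)) else su2)

/-- The projection `P_j : g → su(2)`, `(t, X) ↦ X j`. -/
def Pj {n : ℕ} (j : Fin n) : GV n →ₗ[ℝ] Matrix (Fin 2) (Fin 2) ℂ :=
  (LinearMap.proj j).comp (LinearMap.snd ℝ ℝ (Fin n → Matrix (Fin 2) (Fin 2) ℂ))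

/-- Apply the matrix `X` to qubit `j` of the state `ψ`. -/
def applySingle {n : ℕ} (j : Fin n) (X : Matrix (Fin 2) (Fin 2) ℂ) (ψ : QState n) : QState n :=
  fun I => ∑ k : Fin 2, X (I j) k * ψ (Function.update I j k)

/-- The infinitesimal local-unitary action: `dΦ_ψ(t, X) = i t ψ + Σ_j X_j ψ`. -/
def dPhi {n : ℕ} (ψ : QState n) : GV n →ₗ[ℝ] QState n where
  toFun x := fun I => Complex.I * (x.1 : ℂ) * ψ I + ∑ j, applySingle j (x.2 j) ψ I
  map_add' x y := by
    funext I
    simp only [applySingle, Prod.fst_add, Prod.snd_add, Pi.add_apply, Matrix.add_apply,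
      Complex.ofReal_add, add_mul, Finset.sum_add_distrib]
    ring
  map_smul' r x := by
    funext I
    simp only [applySingle, Prod.smul_fst, Prod.smul_snd, Pi.smul_apply, Matrix.smul_apply,
      smul_eq_mul, Complex.real_smul, Complex.ofReal_mul, RingHom.id_apply,
      Finset.mul_sum, mul_add]
    congr 1
    · ring
    · refine Finset.sum_congr rfl fun j _ => Finset.sum_congr rfl fun k _ => by ring

/-- The stabilizer subalgebra `K_ψ = {(t,X) ∈ g : dΦ_ψ(t,X) = 0}`. -/
def stab {n : ℕ} (ψ : QState n) : Submodule ℝ (GV n) :=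
  gSub n ⊓ LinearMap.ker (dPhi ψ)

/-- The componentwise bracket on `g` (zero in the `u(1)` component). -/
def gBracket {n : ℕ} (x y : GV n) : GV n :=
  (0, fun j => ⁅x.2 j, y.2 j⁆)

/-- An `su(2)` block for `ψ`: a set `S` of qubits with `dim (K_ψ ∩ g_S) > 1` and
`dim (K_ψ ∩ g_{S'}) = 0` for every proper subset `S' ⊊ S`. -/
def Su2Block {n : ℕ} (ψ : QState n) (S : Set (Fin n)) : Prop :=
  1 < Module.finrank ℝ ↥(stab ψ ⊓ gS S) ∧
  ∀ S' : Set (Fin n), S' ⊂ S → Module.finrank ℝ ↥(stab ψ ⊓ gS S') = 0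

/-- The union `B` of all `su(2)` blocks for `ψ`. -/
def blockUnion {n : ℕ} (ψ : QState n) : Set (Fin n) :=
  {q | ∃ S : Set (Fin n), Su2Block ψ S ∧ q ∈ S}

/-- The number `p` of `su(2)` blocks for `ψ`. -/
def blockCount {n : ℕ} (ψ : QState n) : ℕ :=
  {S : Set (Fin n) | Su2Block ψ S}.ncard

/-- `ψ` factors across the set `S` of qubits: `ψ(I) = φ(I|_S) · χ(I|_{Sᶜ})`. -/
def FactorsAcross {n : ℕ} (ψ : QState n) (S : Set (Fin n)) : Prop :=
  ∃ (φ : (↥S → Fin 2) → ℂ) (χ : (↥(Sᶜ) → Fin 2) → ℂ),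
    ∀ I : Fin n → Fin 2, ψ I = φ (fun j => I j.1) * χ (fun j => I j.1)

/-- `ψ` is a nonproduct state: it factors across no proper nonempty set of qubits. -/
def IsNonproduct {n : ℕ} (ψ : QState n) : Prop :=
  ∀ S : Set (Fin n), S ≠ ∅ → S ≠ Set.univ → ¬ FactorsAcross ψ S

/-- `ψ` has a single-qubit factor. -/
def HasSingleQubitFactor {n : ℕ} (ψ : QState n) : Prop :=
  ∃ j : Fin n, FactorsAcross ψ {j}

/-- Apply the local unitary (or just local linear) transformation `⊗_j U_j` to `ψ`. -/
def luApply {n : ℕ} (U : Fin n → Matrix (Fin 2) (Fin 2) ℂ) (ψ : QState n) : QState n :=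
  fun I => ∑ J : Fin n → Fin 2, (∏ j, U j (I j) (J j)) * ψ J

/-- Local unitary equivalence of `n`-qubit states. -/
def LUEquiv {n : ℕ} (ψ ψ' : QState n) : Prop :=
  ∃ U : Fin n → Matrix (Fin 2) (Fin 2) ℂ,
    (∀ j, U j ∈ Matrix.unitaryGroup (Fin 2) ℂ) ∧ ψ' = luApply U ψ

/-- The two-qubit singlet state `φ(a,b) = δ_{a0} δ_{b1} − δ_{a1} δ_{b0}`. -/
def singletFn : Fin 2 → Fin 2 → ℂ := fun a b =>
  if a = 0 ∧ b = 1 then 1 else if a = 1 ∧ b = 0 then -1 else 0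

/-- `ψ` has a singlet factor: it is LU-equivalent to a state that factors across a
two-element set of qubits, with the two-qubit factor being the singlet. -/
def HasSingletFactor {n : ℕ} (ψ : QState n) : Prop :=
  ∃ ψ' : QState n, LUEquiv ψ ψ' ∧ ∃ j k : Fin n, j ≠ k ∧
    ∃ χ : (↥(({j, k} : Set (Fin n))ᶜ) → Fin 2) → ℂ,
      ∀ I : Fin n → Fin 2, ψ' I = singletFn (I j) (I k) * χ (fun q => I q.1)

/-- The matrix `A = diag(i, −i) ∈ su(2)`. -/
def matA : Matrix (Fin 2) (Fin 2) ℂ := !![Complex.I, 0; 0, -Complex.I]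

/-- The generalized `n`-qubit GHZ state `α|0…0⟩ + β|1…1⟩`. -/
def ghz (n : ℕ) (α β : ℂ) : QState n := fun I =>
  if ∀ j, I j = 0 then α else if ∀ j, I j = 1 then β else 0

namespace Aux8

local notation "M2" => Matrix (Fin 2) (Fin 2) ℂ

/-- concrete 2-independence -/
def Ind2 {M : Type*} [AddCommGroup M] [Module ℝ M] (u v : M) : Prop :=
  ∀ r s : ℝ, r • u + s • v = 0 → r = 0 ∧ s = 0

lemma Ind2.left_ne_zero {M : Type*} [AddCommGroup M] [Module ℝ M] {u v : M}
    (h : Ind2 u v) : u ≠ 0 := by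
  intro h0
  have := h 1 0 (by simp [h0])
  simpa using this.1

lemma Ind2.right_ne_zero {M : Type*} [AddCommGroup M] [Module ℝ M] {u v : M}
    (h : Ind2 u v) : v ≠ 0 := by
  intro h0
  have := h 0 1 (by simp [h0])
  simpa using this.2

lemma Ind2.no_mul {M : Type*} [AddCommGroup M] [Module ℝ M] {u v : M}
    (h : Ind2 u v) (r : ℝ) : u ≠ r • v := by
  intro h0
  have hz : (1 : ℝ) • u + (-r) • v = 0 := by
    rw [one_smul, h0, neg_smul]; exact add_neg_cancel _
  have := h 1 (-r) hz
  simpa using this.1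

lemma mem_su2_iff {X : M2} : X ∈ su2 ↔ Xᴴ = -X ∧ X.trace = 0 := Iff.rfl

lemma su2_spec {X : M2} (h : X ∈ su2) :
    (starRingEnd ℂ) (X 0 0) = -(X 0 0) ∧ X 1 1 = -(X 0 0) ∧ X 1 0 = -(starRingEnd ℂ) (X 0 1) := by
  obtain ⟨h1, h2⟩ := h
  have e00 := congrFun (congrFun h1 0) 0
  have e01 := congrFun (congrFun h1 0) 1
  simp only [Matrix.conjTranspose_apply, Matrix.neg_apply] at e00 e01
  have htr : X 0 0 + X 1 1 = 0 := by rw [← Matrix.trace_fin_two]; exact h2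
  refine ⟨by simpa using e00, by linear_combination htr, ?_⟩
  have := congrArg (starRingEnd ℂ) e01
  simpa [Complex.conj_conj] using this

lemma su2_eq_zero {X : M2} (h : X ∈ su2) (h1 : X 0 0 = 0) (h2 : X 0 1 = 0) : X = 0 := by
  obtain ⟨_, hb, hc⟩ := su2_spec h
  ext i j
  fin_cases i <;> fin_cases j <;> simp [h1, h2, hb, hc]

lemma su2_trace_sq {X : M2} (h : X ∈ su2) :
    (X * X).trace =
      (((-2 : ℝ) * (Complex.normSq (X 0 0) + Complex.normSq (X 0 1)) : ℝ) : ℂ) := by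
  obtain ⟨ha, hb, hc⟩ := su2_spec h
  have n0 : ((Complex.normSq (X 0 0) : ℝ) : ℂ) = (starRingEnd ℂ) (X 0 0) * (X 0 0) :=
    Complex.normSq_eq_conj_mul_self
  have n1 : ((Complex.normSq (X 0 1) : ℝ) : ℂ) = (starRingEnd ℂ) (X 0 1) * (X 0 1) :=
    Complex.normSq_eq_conj_mul_self
  rw [Matrix.trace_fin_two]
  simp only [Matrix.mul_apply, Fin.sum_univ_two]
  push_cast
  rw [n0, n1, hb, hc]
  linear_combination (2 * X 0 0) * ha

lemma su2_trace_sq_ne_zero {X : M2} (h : X ∈ su2) (h0 : X ≠ 0) : (X * X).trace ≠ 0 := by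
  rw [su2_trace_sq h]
  intro hz
  rw [Complex.ofReal_eq_zero] at hz
  have h2 : Complex.normSq (X 0 0) = 0 ∧ Complex.normSq (X 0 1) = 0 := by
    constructor <;> nlinarith [Complex.normSq_nonneg (X 0 1), Complex.normSq_nonneg (X 0 0)]
  exact h0 (su2_eq_zero h (Complex.normSq_eq_zero.mp h2.1) (Complex.normSq_eq_zero.mp h2.2))

lemma su2_det {X : M2} (h : X ∈ su2) :
    X.det = (((Complex.normSq (X 0 0) + Complex.normSq (X 0 1) : ℝ)) : ℂ) := by
  obtain ⟨ha, hb, hc⟩ := su2_spec h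
  have n0 : ((Complex.normSq (X 0 0) : ℝ) : ℂ) = (starRingEnd ℂ) (X 0 0) * (X 0 0) :=
    Complex.normSq_eq_conj_mul_self
  have n1 : ((Complex.normSq (X 0 1) : ℝ) : ℂ) = (starRingEnd ℂ) (X 0 1) * (X 0 1) :=
    Complex.normSq_eq_conj_mul_self
  rw [Matrix.det_fin_two]
  push_cast
  rw [n0, n1, hb, hc]
  linear_combination (- X 0 0) * ha

lemma su2_det_ne_zero {X : M2} (h : X ∈ su2) (h0 : X ≠ 0) : X.det ≠ 0 := by
  rw [su2_det h]
  intro hz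
  rw [Complex.ofReal_eq_zero] at hz
  have h2 : Complex.normSq (X 0 0) = 0 ∧ Complex.normSq (X 0 1) = 0 := by
    constructor <;> nlinarith [Complex.normSq_nonneg (X 0 1), Complex.normSq_nonneg (X 0 0)]
  exact h0 (su2_eq_zero h (Complex.normSq_eq_zero.mp h2.1) (Complex.normSq_eq_zero.mp h2.2))

lemma trace_comm_right (A B : M2) : ((A * B - B * A) * B).trace = 0 := by
  simp only [sub_mul, Matrix.trace_sub]
  rw [mul_assoc B A B, Matrix.trace_mul_comm B (A * B), sub_self]

lemma trace_comm_left (A B : M2) : ((A * B - B * A) * A).trace = 0 := by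
  simp only [sub_mul, Matrix.trace_sub]
  rw [mul_assoc A B A, Matrix.trace_mul_comm A (B * A), sub_self]

lemma trace_mul_comm3_left (A B : M2) : (A * (A * B - B * A)).trace = 0 := by
  simp only [mul_sub, Matrix.trace_sub]
  rw [← mul_assoc A A B, Matrix.trace_mul_comm (A * A) B, Matrix.trace_mul_comm A (B * A),
    mul_assoc B A A, sub_self]

lemma trace_mul_comm3_mid (A B : M2) : (B * (A * B - B * A)).trace = 0 := by
  simp only [mul_sub, Matrix.trace_sub]
  rw [Matrix.trace_mul_comm B (B * A), mul_assoc B A B, sub_self]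

lemma su2_trace_mul_real {A B : M2} (hA : A ∈ su2) (hB : B ∈ su2) :
    ∃ r : ℝ, (A * B).trace = (r : ℂ) := by
  refine ⟨(A * B).trace.re, ?_⟩
  have h1 : (starRingEnd ℂ) ((A * B).trace) = (A * B).trace := by
    have : ((A * B)ᴴ).trace = star ((A * B).trace) := Matrix.trace_conjTranspose (A * B)
    rw [Matrix.conjTranspose_mul, hB.1, hA.1, Matrix.neg_mul, Matrix.mul_neg, neg_neg,
      Matrix.trace_mul_comm] at this
    exact this.symm
  exact ((Complex.conj_eq_iff_re).mp h1).symm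

lemma clifford {A B : M2} (hA : A.trace = 0) (hB : B.trace = 0) :
    A * B + B * A = (A * B).trace • (1 : M2) := by
  rw [Matrix.trace_fin_two] at hA hB
  have hA' : A 1 1 = -A 0 0 := by linear_combination hA
  have hB' : B 1 1 = -B 0 0 := by linear_combination hB
  ext i j
  fin_cases i <;> fin_cases j <;>
    · simp [Matrix.mul_apply, Fin.sum_univ_two, Matrix.trace_fin_two, Matrix.one_apply, hA', hB']
      try ring

lemma adjugate_eq_neg {B : M2} (hB : B.trace = 0) : B.adjugate = -B := by
  rw [Matrix.trace_fin_two] at hB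
  have hB' : B 1 1 = -B 0 0 := by linear_combination hB
  ext i j
  fin_cases i <;> fin_cases j <;> simp [Matrix.adjugate_fin_two, hB']

lemma real_smul_M2 (r : ℝ) (M : M2) : ((r : ℂ) • M) = r • M := by
  ext i j; simp [Complex.real_smul]

lemma su2_cent {A B : M2} (hA : A ∈ su2) (hB : B ∈ su2) (hc : A * B = B * A) (h0 : B ≠ 0) :
    ∃ r : ℝ, A = r • B := by
  obtain ⟨rc, hrc⟩ := su2_trace_mul_real hA hB
  have hcl : A * B + B * A = (A * B).trace • (1 : M2) := clifford hA.2 hB.2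
  rw [← hc] at hcl
  have h2 : (2 : ℂ) • (A * B) = (A * B).trace • (1 : M2) := by
    rw [two_smul]; exact hcl
  have h3 := congrArg (· * B.adjugate) h2
  simp only [Matrix.smul_mul, Matrix.one_mul] at h3
  rw [mul_assoc, Matrix.mul_adjugate, adjugate_eq_neg hB.2] at h3
  rw [Matrix.mul_smul, Matrix.mul_one, smul_smul, hrc] at h3
  have hd := su2_det_ne_zero hB h0
  have h2d : (2 * B.det : ℂ) ≠ 0 := mul_ne_zero two_ne_zero hd
  have h5 : A = ((2 * B.det)⁻¹ * (rc : ℂ)) • (-B) := by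
    have h6 := congrArg (fun M => ((2 * B.det)⁻¹ : ℂ) • M) h3
    simp only [smul_smul] at h6
    rw [inv_mul_cancel₀ h2d, one_smul] at h6
    exact h6
  obtain ⟨d, hdet⟩ : ∃ d : ℝ, B.det = (d : ℂ) := ⟨_, su2_det hB⟩
  refine ⟨-((2 * d)⁻¹ * rc), ?_⟩
  have hco : ((2 * (d:ℂ))⁻¹ * (rc : ℂ)) = ((((2*d)⁻¹ * rc : ℝ)) : ℂ) := by push_cast; ring
  rw [h5, hdet, hco, smul_neg, real_smul_M2, neg_smul]

lemma su2_bracket_mem {A B : M2} (hA : A ∈ su2) (hB : B ∈ su2) : A * B - B * A ∈ su2 := by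
  constructor
  · rw [Matrix.conjTranspose_sub, Matrix.conjTranspose_mul, Matrix.conjTranspose_mul,
      hA.1, hB.1]
    simp [Matrix.mul_neg, Matrix.neg_mul]
  · rw [Matrix.trace_sub, Matrix.trace_mul_comm, sub_self]

lemma su2_perp_bracket {c u : M2} (hc : c ∈ su2) (hu : u ∈ su2)
    (hperp : (c * u).trace = 0) (hc0 : c ≠ 0) (hu0 : u ≠ 0) : c * u - u * c ≠ 0 := by
  intro h
  obtain ⟨r, hr⟩ := su2_cent hc hu (sub_eq_zero.mp h) hu0
  rw [hr, Matrix.smul_mul, Matrix.trace_smul] at hperp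
  rcases smul_eq_zero.mp hperp with h1 | h2
  · exact hc0 (by rw [hr, h1, zero_smul])
  · exact su2_trace_sq_ne_zero hu hu0 h2

end Aux8
namespace Aux8

local notation "M2" => Matrix (Fin 2) (Fin 2) ℂ

def E1 : M2 := !![Complex.I, 0; 0, -Complex.I]
def E2 : M2 := !![0, 1; -1, 0]
def E3 : M2 := !![0, Complex.I; Complex.I, 0]

lemma E1_mem : E1 ∈ su2 := by
  constructor
  · ext i j; fin_cases i <;> fin_cases j <;>
      simp [E1, Matrix.conjTranspose_apply]
  · simp [E1, Matrix.trace_fin_two]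

lemma E2_mem : E2 ∈ su2 := by
  constructor
  · ext i j; fin_cases i <;> fin_cases j <;>
      simp [E2, Matrix.conjTranspose_apply]
  · simp [E2, Matrix.trace_fin_two]

lemma E3_mem : E3 ∈ su2 := by
  constructor
  · ext i j; fin_cases i <;> fin_cases j <;>
      simp [E3, Matrix.conjTranspose_apply]
  · simp [E3, Matrix.trace_fin_two]

lemma E1_ne_zero : E1 ≠ 0 := by
  intro h
  have := congrFun (congrFun h 0) 0
  simp [E1, Complex.I_ne_zero] at this

lemma su2_decomp {X : M2} (h : X ∈ su2) :
    X = (X 0 0).im • E1 + (X 0 1).re • E2 + (X 0 1).im • E3 := by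
  obtain ⟨ha, hb, hc⟩ := su2_spec h
  have hre : (X 0 0).re = 0 := by
    have := congrArg Complex.re ha
    simp at this
    linarith
  have hcre := congrArg Complex.re hc
  have hcim := congrArg Complex.im hc
  simp at hcre hcim
  ext i j
  fin_cases i <;> fin_cases j <;>
    simp [E1, E2, E3, Complex.ext_iff, Complex.real_smul, hb, hre, hcre, hcim]

lemma su2_le_spanE : su2 ≤ Submodule.span ℝ (Set.range ![E1, E2, E3]) := by
  intro X hX
  rw [su2_decomp hX]
  refine Submodule.add_mem _ (Submodule.add_mem _ ?_ ?_) ?_ <;>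
    refine Submodule.smul_mem _ _ (Submodule.subset_span ?_)
  · exact ⟨0, rfl⟩
  · exact ⟨1, rfl⟩
  · exact ⟨2, rfl⟩

lemma su2_finrank_le3 : Module.finrank ℝ ↥su2 ≤ 3 := by
  have h1 := Submodule.finrank_mono (su2_le_spanE)
  refine h1.trans ?_
  have h2 := finrank_span_le_card (R := ℝ) (Set.range ![E1, E2, E3])
  refine h2.trans ?_
  rw [Set.toFinset_range]
  exact (Finset.card_image_le).trans (by simp)

lemma su2_triple_indep {u v : M2} (hu : u ∈ su2) (hv : v ∈ su2) (hind : Ind2 u v) :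
    LinearIndependent ℝ ![u, v, u * v - v * u] := by
  set w := u * v - v * u with hw
  have hw_mem : w ∈ su2 := su2_bracket_mem hu hv
  have hw0 : w ≠ 0 := by
    intro h0
    obtain ⟨r, hr⟩ := su2_cent hu hv (sub_eq_zero.mp h0) hind.right_ne_zero
    exact hind.no_mul r hr
  rw [Fintype.linearIndependent_iff]
  intro g hg
  rw [Fin.sum_univ_three] at hg
  simp only [Matrix.cons_val_zero, Matrix.cons_val_one, Matrix.head_cons,
    Matrix.cons_val_two, Matrix.tail_cons] at hg
  have hg2 : g 2 = 0 := by
    have htr := congrArg (fun M => (M * w).trace) hg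
    simp only [add_mul, Matrix.smul_mul, Matrix.trace_add, Matrix.trace_smul,
      Matrix.zero_mul, Matrix.trace_zero] at htr
    rw [hw, trace_mul_comm3_left u v, trace_mul_comm3_mid u v] at htr
    simp only [smul_zero, zero_add, add_zero] at htr
    rcases smul_eq_zero.mp htr with h1 | h2
    · exact h1
    · exact absurd h2 (su2_trace_sq_ne_zero hw_mem hw0)
  rw [hg2, zero_smul, add_zero] at hg
  obtain ⟨hg0, hg1⟩ := hind _ _ hg
  intro i
  fin_cases i <;> assumption

lemma su2_triple_span {u v : M2} (hu : u ∈ su2) (hv : v ∈ su2) (hind : Ind2 u v) :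
    ∀ A ∈ su2, ∃ c : Fin 3 → ℝ, c 0 • u + c 1 • v + c 2 • (u * v - v * u) = A := by
  intro A hA
  have hindep := su2_triple_indep hu hv hind
  have hspan_le : Submodule.span ℝ (Set.range ![u, v, u * v - v * u]) ≤ su2 := by
    rw [Submodule.span_le]
    rintro X ⟨i, rfl⟩
    fin_cases i
    · exact hu
    · exact hv
    · exact su2_bracket_mem hu hv
  have hfr : Module.finrank ℝ ↥(Submodule.span ℝ (Set.range ![u, v, u * v - v * u])) = 3 := by
    rw [finrank_span_eq_card hindep]; simp
  have heq : Submodule.span ℝ (Set.range ![u, v, u * v - v * u]) = su2 :=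
    Submodule.eq_of_le_of_finrank_le hspan_le (su2_finrank_le3.trans_eq hfr.symm)
  rw [← heq] at hA
  obtain ⟨c, hc⟩ := (Submodule.mem_span_range_iff_exists_fun ℝ).mp hA
  refine ⟨c, ?_⟩
  rw [← hc, Fin.sum_univ_three]
  simp

/-- if `u₁` is a nonzero element of su2, there are `A B ∈ su2` whose brackets with `u₁`
are linearly independent. -/
lemma exists_indep_brackets {u₁ : M2} (hu : u₁ ∈ su2) (h0 : u₁ ≠ 0) :
    ∃ A ∈ su2, ∃ B ∈ su2, Ind2 (A * u₁ - u₁ * A) (B * u₁ - u₁ * B) := by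
  -- step 1 : some element of su2 does not commute with u₁
  have step1 : ∃ A ∈ su2, A * u₁ - u₁ * A ≠ 0 := by
    by_contra hcon
    push_neg at hcon
    obtain ⟨r1, hr1⟩ := su2_cent E1_mem hu (sub_eq_zero.mp (hcon E1 E1_mem)) h0
    obtain ⟨r2, hr2⟩ := su2_cent E2_mem hu (sub_eq_zero.mp (hcon E2 E2_mem)) h0
    have hr1ne : r1 ≠ 0 := fun h => E1_ne_zero (by rw [hr1, h, zero_smul])
    have hu1eq : u₁ = r1⁻¹ • E1 := by rw [hr1, smul_smul, inv_mul_cancel₀ hr1ne, one_smul]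
    have hE2 : E2 = (r2 * r1⁻¹) • E1 := by rw [hr2, hu1eq, smul_smul]
    have h21 := congrFun (congrFun hE2 0) 1
    simp [E1, E2] at h21
  obtain ⟨A, hA, hAne⟩ := step1
  set c := A * u₁ - u₁ * A with hc
  have hc_mem : c ∈ su2 := su2_bracket_mem hA hu
  have hc_perp : (c * u₁).trace = 0 := trace_comm_right A u₁
  refine ⟨A, hA, ?_⟩
  by_contra hcon
  push_neg at hcon
  -- every bracket [B,u₁] is a real multiple of c
  have hmul : ∀ B ∈ su2, ∃ t : ℝ, B * u₁ - u₁ * B = t • c := by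
    intro B hB
    have hnind := hcon B hB
    rw [Ind2] at hnind
    push_neg at hnind
    obtain ⟨r, s, hrs, hne⟩ := hnind
    by_cases hs : s = 0
    · exfalso
      rw [hs, zero_smul, add_zero] at hrs
      rcases smul_eq_zero.mp hrs with h1 | h2
      · exact (hne h1) hs
      · exact hAne h2
    · refine ⟨-r / s, ?_⟩
      have hthis := congrArg (fun M => (s⁻¹ : ℝ) • M) hrs
      simp only [smul_add, smul_smul, smul_zero] at hthis
      rw [inv_mul_cancel₀ hs, one_smul] at hthis
      have h2 : B * u₁ - u₁ * B = -((s⁻¹ * r) • (A * u₁ - u₁ * A)) :=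
        eq_neg_of_add_eq_zero_right hthis
      rw [h2, ← hc, ← neg_smul]
      congr 1
      field_simp
  -- apply to B := c
  obtain ⟨t, ht⟩ := hmul c hc_mem
  have ht0 : t = 0 := by
    have htr := congrArg (fun M => (M * c).trace) ht
    simp only [Matrix.smul_mul, Matrix.trace_smul] at htr
    rw [trace_comm_left c u₁] at htr
    rcases (smul_eq_zero.mp htr.symm) with h1 | h2
    · exact h1
    · exact absurd h2 (su2_trace_sq_ne_zero hc_mem hAne)
  rw [ht0, zero_smul] at ht
  obtain ⟨ρ, hρ⟩ := su2_cent hc_mem hu (sub_eq_zero.mp ht) h0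
  rw [hρ, Matrix.smul_mul, Matrix.trace_smul] at hc_perp
  rcases smul_eq_zero.mp hc_perp with h1 | h2
  · exact hAne (by rw [hρ, h1, zero_smul])
  · exact absurd h2 (su2_trace_sq_ne_zero hu h0)

end Aux8
namespace Aux8

section FinrankHelpers
variable {M : Type*} [AddCommGroup M] [Module ℝ M] [FiniteDimensional ℝ M]

lemma one_lt_finrank_of_ind2 {P : Submodule ℝ M} {u v : M} (hu : u ∈ P) (hv : v ∈ P)
    (h : Ind2 u v) : 1 < Module.finrank ℝ ↥P := by
  have hli : LinearIndependent ℝ (![⟨u, hu⟩, ⟨v, hv⟩] : Fin 2 → ↥P) := by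
    rw [Fintype.linearIndependent_iff]
    intro g hg
    have hg2 := congrArg (P.subtype) hg
    rw [map_sum] at hg2
    rw [Fin.sum_univ_two] at hg2
    simp only [map_smul, Matrix.cons_val_zero, Matrix.cons_val_one, Matrix.head_cons,
      Submodule.coe_subtype, map_zero] at hg2
    obtain ⟨h0, h1⟩ := h _ _ hg2
    intro i; fin_cases i <;> assumption
  have hcard := hli.fintype_card_le_finrank
  simp at hcard; omega

lemma exists_ind2_of_one_lt_finrank {P : Submodule ℝ M} (h : 1 < Module.finrank ℝ ↥P) :
    ∃ u ∈ P, ∃ v ∈ P, Ind2 u v := by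
  have hP : P ≠ ⊥ := by
    intro h0
    rw [h0] at h
    simp [finrank_bot] at h
  obtain ⟨y, hy, hy0⟩ := (Submodule.ne_bot_iff P).mp hP
  by_contra hcon
  push_neg at hcon
  have hle : P ≤ Submodule.span ℝ {y} := by
    intro z hz
    have hni := hcon y hy z hz
    rw [Ind2] at hni
    push_neg at hni
    obtain ⟨r, s, hrs, hne⟩ := hni
    by_cases hs : s = 0
    · exfalso
      rw [hs, zero_smul, add_zero] at hrs
      rcases smul_eq_zero.mp hrs with h1 | h2
      · exact (hne h1) hs
      · exact hy0 h2
    · have hz2 : z = -((s⁻¹ * r)) • y := by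
        have h6 := congrArg (fun m => (s⁻¹ : ℝ) • m) hrs
        simp only [smul_add, smul_smul, smul_zero] at h6
        rw [inv_mul_cancel₀ hs, one_smul] at h6
        rw [neg_smul]
        exact eq_neg_of_add_eq_zero_right h6
      rw [hz2]
      exact Submodule.smul_mem _ _ (Submodule.mem_span_singleton_self y)
  have hmono := Submodule.finrank_mono hle
  rw [finrank_span_singleton hy0] at hmono
  omega

lemma line_of_finrank_le_one {P : Submodule ℝ M} (h : Module.finrank ℝ ↥P ≤ 1) {y : M}
    (hy : y ∈ P) (hy0 : y ≠ 0) {z : M} (hz : z ∈ P) : ∃ r : ℝ, z = r • y := by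
  by_contra hcon
  push_neg at hcon
  have hind : Ind2 y z := by
    intro r s hrs
    by_cases hs : s = 0
    · rw [hs, zero_smul, add_zero] at hrs
      rcases smul_eq_zero.mp hrs with h1 | h2
      · exact ⟨h1, hs⟩
      · exact absurd h2 hy0
    · exfalso
      have hz2 : z = -((s⁻¹ * r)) • y := by
        have h6 := congrArg (fun m => (s⁻¹ : ℝ) • m) hrs
        simp only [smul_add, smul_smul, smul_zero] at h6
        rw [inv_mul_cancel₀ hs, one_smul] at h6
        rw [neg_smul]
        exact eq_neg_of_add_eq_zero_right h6
      exact hcon _ hz2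
  exact absurd (one_lt_finrank_of_ind2 hy hz hind) (by omega)

end FinrankHelpers

end Aux8
namespace Aux8

local notation "M2" => Matrix (Fin 2) (Fin 2) ℂ

variable {n : ℕ}

/-- `applySingle` as a `ℂ`-linear map on states. -/
def ASL (j : Fin n) (X : M2) : QState n →ₗ[ℂ] QState n where
  toFun := applySingle j X
  map_add' φ χ := by
    funext I
    simp only [applySingle, Pi.add_apply, mul_add, Finset.sum_add_distrib]
  map_smul' c φ := by
    funext I
    simp only [applySingle, Pi.smul_apply, smul_eq_mul, RingHom.id_apply, Finset.mul_sum]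
    exact Finset.sum_congr rfl fun k _ => by ring

lemma ASL_apply (j : Fin n) (X : M2) (ψ : QState n) : ASL j X ψ = applySingle j X ψ := rfl

lemma dPhi_eq (φ : QState n) (x : GV n) :
    dPhi φ x = (Complex.I * x.1) • φ + ∑ j, ASL j (x.2 j) φ := by
  funext I
  simp only [dPhi, LinearMap.coe_mk, AddHom.coe_mk, Pi.add_apply, Pi.smul_apply,
    Finset.sum_apply, smul_eq_mul, ASL_apply]

lemma dPhi_zero_state (x : GV n) : dPhi (0 : QState n) x = 0 := by
  funext I
  simp [dPhi, applySingle]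

lemma ASL_sub_matrix (j : Fin n) (X Y : M2) (ψ : QState n) :
    ASL j (X - Y) ψ = ASL j X ψ - ASL j Y ψ := by
  funext I
  simp only [ASL_apply, applySingle, Matrix.sub_apply, sub_mul, Pi.sub_apply,
    Finset.sum_sub_distrib]

lemma ASL_comp_same (j : Fin n) (X Y : M2) (ψ : QState n) :
    ASL j X (ASL j Y ψ) = ASL j (X * Y) ψ := by
  funext I
  simp only [ASL_apply, applySingle, Function.update_self, Function.update_idem,
    Matrix.mul_apply, Finset.mul_sum, Finset.sum_mul]
  rw [Finset.sum_comm]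
  exact Finset.sum_congr rfl fun m _ => Finset.sum_congr rfl fun k _ => by ring

lemma ASL_comp_comm {j k : Fin n} (h : j ≠ k) (X Y : M2) (ψ : QState n) :
    ASL j X (ASL k Y ψ) = ASL k Y (ASL j X ψ) := by
  funext I
  simp only [ASL_apply, applySingle, Function.update_of_ne h.symm, Function.update_of_ne h,
    Function.update_comm h, Finset.mul_sum]
  rw [Finset.sum_comm]
  exact Finset.sum_congr rfl fun m _ => Finset.sum_congr rfl fun l _ => by ring

lemma dPhi_bracket (ψ : QState n) (x y : GV n) :
    dPhi ψ (gBracket x y) = dPhi (dPhi ψ y) x - dPhi (dPhi ψ x) y := by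
  have hexp : ∀ (u v : GV n),
      dPhi (dPhi ψ v) u =
        (Complex.I * u.1) • ((Complex.I * v.1) • ψ)
        + (Complex.I * u.1) • (∑ k, ASL k (v.2 k) ψ)
        + (Complex.I * v.1) • (∑ j, ASL j (u.2 j) ψ)
        + ∑ j, ∑ k, ASL j (u.2 j) (ASL k (v.2 k) ψ) := by
    intro u v
    rw [dPhi_eq ψ v, dPhi_eq (((Complex.I * v.1) • ψ) + ∑ k, ASL k (v.2 k) ψ) u]
    rw [smul_add]
    have hsum : ∑ j, ASL j (u.2 j) ((Complex.I * ↑v.1) • ψ + ∑ k, ASL k (v.2 k) ψ)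
        = (Complex.I * v.1) • (∑ j, ASL j (u.2 j) ψ)
          + ∑ j, ∑ k, ASL j (u.2 j) (ASL k (v.2 k) ψ) := by
      simp only [map_add, map_smul, map_sum]
      rw [Finset.sum_add_distrib, ← Finset.smul_sum]
    rw [hsum]
    abel
  rw [hexp x y, hexp y x]
  have hcomm : (Complex.I * x.1) • ((Complex.I * y.1) • ψ)
      = (Complex.I * y.1) • ((Complex.I * x.1) • ψ) := by
    rw [smul_smul, smul_smul, mul_comm]
  rw [hcomm]
  have hdouble : ∑ j, ∑ k, ASL j (y.2 j) (ASL k (x.2 k) ψ)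
      = ∑ j, ∑ k, ASL k (y.2 k) (ASL j (x.2 j) ψ) := by rw [Finset.sum_comm]
  rw [hdouble]
  have hLHS : dPhi ψ (gBracket x y)
      = ∑ j, (ASL j (x.2 j) (ASL j (y.2 j) ψ) - ASL j (y.2 j) (ASL j (x.2 j) ψ)) := by
    rw [dPhi_eq]
    simp only [gBracket, Complex.ofReal_zero, mul_zero, zero_smul, zero_add]
    refine Finset.sum_congr rfl fun j _ => ?_
    rw [Ring.lie_def, ASL_sub_matrix, ASL_comp_same, ASL_comp_same]
  rw [hLHS]
  have hdiag : ∀ j : Fin n,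
      ASL j (x.2 j) (ASL j (y.2 j) ψ) - ASL j (y.2 j) (ASL j (x.2 j) ψ)
      = ∑ k, (ASL j (x.2 j) (ASL k (y.2 k) ψ) - ASL k (y.2 k) (ASL j (x.2 j) ψ)) := by
    intro j
    rw [Finset.sum_eq_single j]
    · intro k _ hk
      rw [ASL_comp_comm (Ne.symm hk) (x.2 j) (y.2 k) ψ, sub_self]
    · intro h; exact absurd (Finset.mem_univ j) h
  calc ∑ j, (ASL j (x.2 j) (ASL j (y.2 j) ψ) - ASL j (y.2 j) (ASL j (x.2 j) ψ))
      = ∑ j, ∑ k, (ASL j (x.2 j) (ASL k (y.2 k) ψ) - ASL k (y.2 k) (ASL j (x.2 j) ψ)) :=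
        Finset.sum_congr rfl fun j _ => hdiag j
    _ = ∑ j, ∑ k, ASL j (x.2 j) (ASL k (y.2 k) ψ)
        - ∑ j, ∑ k, ASL k (y.2 k) (ASL j (x.2 j) ψ) := by
        rw [← Finset.sum_sub_distrib]
        exact Finset.sum_congr rfl fun j _ => by rw [Finset.sum_sub_distrib]
    _ = _ := by abel

end Aux8
namespace Aux8

local notation "M2" => Matrix (Fin 2) (Fin 2) ℂ

variable {n : ℕ}

lemma Pj_apply (j : Fin n) (x : GV n) : Pj j x = x.2 j := rfl

lemma mem_stab_iff {ψ : QState n} {x : GV n} :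
    x ∈ stab ψ ↔ (∀ k, x.2 k ∈ su2) ∧ dPhi ψ x = 0 := by
  rw [stab, Submodule.mem_inf, LinearMap.mem_ker, gSub, Submodule.mem_prod, Submodule.mem_pi]
  simp only [Submodule.mem_top, true_and, Set.mem_univ, forall_true_left]

lemma mem_gS_iff {S : Set (Fin n)} {x : GV n} :
    x ∈ gS S ↔ x.1 = 0 ∧ (∀ k, k ∈ S → x.2 k ∈ su2) ∧ (∀ k, k ∉ S → x.2 k = 0) := by
  rw [gS, Submodule.mem_prod, Submodule.mem_pi, Submodule.mem_bot]
  constructor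
  · rintro ⟨h1, h2⟩
    refine ⟨h1, fun k hk => ?_, fun k hk => ?_⟩
    · have := h2 k (Set.mem_univ k); rwa [if_pos hk] at this
    · have := h2 k (Set.mem_univ k); rwa [if_neg hk, Submodule.mem_bot] at this
  · rintro ⟨h1, h2, h3⟩
    refine ⟨h1, fun k _ => ?_⟩
    by_cases hk : k ∈ S
    · rw [if_pos hk]; exact h2 k hk
    · rw [if_neg hk, Submodule.mem_bot]; exact h3 k hk

lemma mem_gBar_iff {S : Set (Fin n)} {x : GV n} :
    x ∈ gBar S ↔ (∀ k, k ∉ S → x.2 k ∈ su2) ∧ (∀ k, k ∈ S → x.2 k = 0) := by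
  rw [gBar, Submodule.mem_prod, Submodule.mem_pi]
  simp only [Submodule.mem_top, true_and, Set.mem_univ, forall_true_left]
  constructor
  · rintro h2
    refine ⟨fun k hk => ?_, fun k hk => ?_⟩
    · have := h2 k; rwa [if_neg hk] at this
    · have := h2 k; rwa [if_pos hk, Submodule.mem_bot] at this
  · rintro ⟨h2, h3⟩ k
    by_cases hk : k ∈ S
    · rw [if_pos hk, Submodule.mem_bot]; exact h3 k hk
    · rw [if_neg hk]; exact h2 k hk

lemma mem_KS_iff {ψ : QState n} {S : Set (Fin n)} {x : GV n} :
    x ∈ stab ψ ⊓ gS S ↔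
      (∀ k, x.2 k ∈ su2) ∧ dPhi ψ x = 0 ∧ x.1 = 0 ∧ (∀ k, k ∉ S → x.2 k = 0) := by
  rw [Submodule.mem_inf, mem_stab_iff, mem_gS_iff]
  constructor
  · rintro ⟨⟨h1, h2⟩, h3, _, h5⟩
    exact ⟨h1, h2, h3, h5⟩
  · rintro ⟨h1, h2, h3, h4⟩
    exact ⟨⟨h1, h2⟩, h3, fun k _ => h1 k, h4⟩

lemma mem_K_iff {ψ : QState n} {S : Set (Fin n)} {x : GV n} :
    x ∈ stab ψ ⊓ gBar S ↔
      (∀ k, x.2 k ∈ su2) ∧ dPhi ψ x = 0 ∧ (∀ k, k ∈ S → x.2 k = 0) := by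
  rw [Submodule.mem_inf, mem_stab_iff, mem_gBar_iff]
  constructor
  · rintro ⟨⟨h1, h2⟩, _, h4⟩
    exact ⟨h1, h2, h4⟩
  · rintro ⟨h1, h2, h3⟩
    exact ⟨⟨h1, h2⟩, fun k _ => h1 k, h3⟩

lemma gBracket_fst (x y : GV n) : (gBracket x y).1 = 0 := rfl

lemma gBracket_snd (x y : GV n) (k : Fin n) :
    (gBracket x y).2 k = x.2 k * y.2 k - y.2 k * x.2 k := by
  show ⁅x.2 k, y.2 k⁆ = _
  rw [Ring.lie_def]

lemma stab_bracket {ψ : QState n} {x y : GV n} (hx : x ∈ stab ψ) (hy : y ∈ stab ψ) :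
    gBracket x y ∈ stab ψ := by
  rw [mem_stab_iff] at hx hy ⊢
  refine ⟨fun k => ?_, ?_⟩
  · rw [gBracket_snd]; exact su2_bracket_mem (hx.1 k) (hy.1 k)
  · rw [dPhi_bracket, hx.2, hy.2, dPhi_zero_state, dPhi_zero_state, sub_zero]

lemma bracket_mem_KS {ψ : QState n} {S : Set (Fin n)} {x y : GV n}
    (hx : x ∈ stab ψ) (hy : y ∈ stab ψ)
    (h0 : ∀ k, k ∉ S → x.2 k * y.2 k - y.2 k * x.2 k = 0) :
    gBracket x y ∈ stab ψ ⊓ gS S := by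
  have hb := stab_bracket hx hy
  rw [mem_stab_iff] at hb
  rw [mem_KS_iff]
  exact ⟨hb.1, hb.2, rfl, fun k hk => by rw [gBracket_snd]; exact h0 k hk⟩

lemma stab_fst_eq_zero {ψ : QState n} (hψ : ψ ≠ 0) {x : GV n}
    (hx : dPhi ψ x = 0) (h2 : x.2 = 0) : x.1 = 0 := by
  have hI : ∃ I, ψ I ≠ 0 := by
    by_contra hc
    push_neg at hc
    exact hψ (funext fun I => hc I)
  obtain ⟨I, hI⟩ := hI
  have h3 := congrFun hx I
  have h4 : Complex.I * (x.1 : ℂ) * ψ I = 0 := by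
    simpa [dPhi, h2, applySingle] using h3
  rcases mul_eq_zero.mp h4 with h5 | h5
  · rcases mul_eq_zero.mp h5 with h6 | h6
    · exact absurd h6 Complex.I_ne_zero
    · exact_mod_cast h6
  · exact absurd h5 hI

lemma exists_min_set {α : Type*} [Finite α] (C : Set (Set α)) (h : C.Nonempty) :
    ∃ S ∈ C, ∀ S' ∈ C, ¬ S' ⊂ S := by
  obtain ⟨S, hS, hmin⟩ := (Finite.to_wellFoundedLT (α := Set α)).wf.has_min C h
  exact ⟨S, hS, fun S' h' hss => hmin S' h' hss⟩

end Aux8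
namespace Aux8

local notation "M2" => Matrix (Fin 2) (Fin 2) ℂ

variable {n : ℕ}

lemma per_qubit (ψ : QState n) (hψ : ψ ≠ 0) (j : Fin n) (hj : j ∉ blockUnion ψ) :
    Module.finrank ℝ ↥((stab ψ ⊓ gBar (blockUnion ψ)).map (Pj j)) ≤ 1 := by
  by_contra hcon
  push_neg at hcon
  set B := blockUnion ψ with hBdef
  set K := stab ψ ⊓ gBar B with hKdef
  obtain ⟨u, hu, v, hv, huv⟩ := exists_ind2_of_one_lt_finrank hcon
  rw [Submodule.mem_map] at hu hv
  obtain ⟨a, haK, hau⟩ := hu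
  obtain ⟨b, hbK, hbv⟩ := hv
  rw [Pj_apply] at hau hbv
  have haK' := mem_K_iff.mp haK
  have hbK' := mem_K_iff.mp hbK
  have hastab : a ∈ stab ψ := mem_stab_iff.mpr ⟨haK'.1, haK'.2.1⟩
  have hbstab : b ∈ stab ψ := mem_stab_iff.mpr ⟨hbK'.1, hbK'.2.1⟩
  have hu2 : u ∈ su2 := hau ▸ haK'.1 j
  have hv2 : v ∈ su2 := hbv ▸ hbK'.1 j
  set w := gBracket a b with hwdef
  have hwstab : w ∈ stab ψ := stab_bracket hastab hbstab
  have hwK : w ∈ K := by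
    rw [hKdef, Submodule.mem_inf]
    refine ⟨hwstab, mem_gBar_iff.mpr ⟨fun k _ => (mem_stab_iff.mp hwstab).1 k, fun k hk => ?_⟩⟩
    rw [hwdef, gBracket_snd, haK'.2.2 k hk]
    simp
  have hwj : w.2 j = u * v - v * u := by rw [hwdef, gBracket_snd, hau, hbv]
  have hw3 : u * v - v * u ≠ 0 := by
    intro h0
    obtain ⟨r, hr⟩ := su2_cent hu2 hv2 (sub_eq_zero.mp h0) huv.right_ne_zero
    exact huv.no_mul r hr
  have hsurj : ∀ A ∈ su2, ∃ z, z ∈ K ∧ z.2 j = A := by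
    intro A hA
    obtain ⟨c, hc⟩ := su2_triple_span hu2 hv2 huv A hA
    refine ⟨c 0 • a + c 1 • b + c 2 • w,
      Submodule.add_mem _ (Submodule.add_mem _ (Submodule.smul_mem _ _ haK)
        (Submodule.smul_mem _ _ hbK)) (Submodule.smul_mem _ _ hwK), ?_⟩
    show (c 0 • a + c 1 • b + c 2 • w).2 j = A
    simp only [Prod.snd_add, Prod.smul_snd, Pi.add_apply, Pi.smul_apply]
    rw [hau, hbv, hwj]
    exact hc
  set SS : Set (Set (Fin n)) := {S | S ⊆ Bᶜ ∧ ∃ z, z ∈ stab ψ ⊓ gS S ∧ z.2 j ≠ 0} with hSSdef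
  have hBc : Bᶜ ∈ SS := by
    refine ⟨subset_rfl, w, ?_, by rw [hwj]; exact hw3⟩
    refine bracket_mem_KS hastab hbstab fun k hk => ?_
    rw [haK'.2.2 k (by simpa using hk)]
    simp
  obtain ⟨S, hSmem, hSmin⟩ := exists_min_set SS ⟨_, hBc⟩
  obtain ⟨hSsub, x, hxS, hxj⟩ := hSmem
  have hxmem := mem_KS_iff.mp hxS
  have hxstab : x ∈ stab ψ := mem_stab_iff.mpr ⟨hxmem.1, hxmem.2.1⟩
  set u₁ := x.2 j with hu₁def
  have hu₁2 : u₁ ∈ su2 := hxmem.1 j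
  obtain ⟨A, hA, Bm, hBm, hABind⟩ := exists_indep_brackets hu₁2 hxj
  obtain ⟨wA, hwAK, hwAj⟩ := hsurj A hA
  obtain ⟨wB, hwBK, hwBj⟩ := hsurj Bm hBm
  have hwAK' := mem_K_iff.mp hwAK
  have hwBK' := mem_K_iff.mp hwBK
  have hwAstab : wA ∈ stab ψ := mem_stab_iff.mpr ⟨hwAK'.1, hwAK'.2.1⟩
  have hwBstab : wB ∈ stab ψ := mem_stab_iff.mpr ⟨hwBK'.1, hwBK'.2.1⟩
  set z₁ := gBracket wA x with hz₁def
  set z₂ := gBracket wB x with hz₂def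
  have hz₁S : z₁ ∈ stab ψ ⊓ gS S := by
    refine bracket_mem_KS hwAstab hxstab fun k hk => ?_
    rw [hxmem.2.2.2 k hk]
    simp
  have hz₂S : z₂ ∈ stab ψ ⊓ gS S := by
    refine bracket_mem_KS hwBstab hxstab fun k hk => ?_
    rw [hxmem.2.2.2 k hk]
    simp
  have hz₁j : z₁.2 j = A * u₁ - u₁ * A := by rw [hz₁def, gBracket_snd, hwAj]
  have hz₂j : z₂.2 j = Bm * u₁ - u₁ * Bm := by rw [hz₂def, gBracket_snd, hwBj]
  have hz₁₂ : Ind2 z₁ z₂ := by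
    intro r s hrs
    have h := congrArg (fun z : GV n => z.2 j) hrs
    simp only [Prod.snd_add, Prod.smul_snd, Pi.add_apply, Pi.smul_apply, Prod.snd_zero,
      Pi.zero_apply] at h
    rw [hz₁j, hz₂j] at h
    exact hABind r s h
  have hrankS : 1 < Module.finrank ℝ ↥(stab ψ ⊓ gS S) :=
    one_lt_finrank_of_ind2 hz₁S hz₂S hz₁₂
  have hC2 : ∀ S' : Set (Fin n), S' ⊂ S → stab ψ ⊓ gS S' = ⊥ := by
    intro S' hss
    by_contra hne
    obtain ⟨y', hy', hy'0⟩ := (Submodule.ne_bot_iff _).mp hne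
    have hy'mem := mem_KS_iff.mp hy'
    by_cases hyj : y'.2 j = 0
    · set T1 : Set (Fin n) := {k | y'.2 k ≠ 0} with hT1def
      have hT1sub : T1 ⊆ S \ {j} := by
        intro k hk
        have hkS' : k ∈ S' := by
          by_contra hkk
          exact hk (hy'mem.2.2.2 k hkk)
        refine ⟨hss.subset hkS', fun hkj => ?_⟩
        rw [Set.mem_singleton_iff] at hkj
        exact hk (by rw [hkj]; exact hyj)
      set TT : Set (Set (Fin n)) := {T | T ⊆ S \ {j} ∧ stab ψ ⊓ gS T ≠ ⊥} with hTTdef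
      have hT1mem : T1 ∈ TT := by
        refine ⟨hT1sub, (Submodule.ne_bot_iff _).mpr ⟨y', ?_, hy'0⟩⟩
        exact mem_KS_iff.mpr ⟨hy'mem.1, hy'mem.2.1, hy'mem.2.2.1,
          fun k hk => not_not.mp hk⟩
      obtain ⟨T, hTmem, hTmin⟩ := exists_min_set TT ⟨_, hT1mem⟩
      obtain ⟨hTsub, hTne⟩ := hTmem
      obtain ⟨y, hy, hy0⟩ := (Submodule.ne_bot_iff _).mp hTne
      have hymem := mem_KS_iff.mp hy
      have hystab : y ∈ stab ψ := mem_stab_iff.mpr ⟨hymem.1, hymem.2.1⟩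
      have hsupp : ∀ k ∈ T, y.2 k ≠ 0 := by
        by_contra hcs
        push_neg at hcs
        obtain ⟨k1, hk1T, hk1⟩ := hcs
        have hT2sub : {k | y.2 k ≠ 0} ⊆ T := fun k hk => by
          by_contra hkk
          exact hk (hymem.2.2.2 k hkk)
        have hT2ss : {k | y.2 k ≠ 0} ⊂ T :=
          ⟨hT2sub, fun hTsub2 => (hTsub2 hk1T) hk1⟩
        refine hTmin _ ⟨hT2ss.subset.trans hTsub, (Submodule.ne_bot_iff _).mpr ⟨y, ?_, hy0⟩⟩ hT2ss
        exact mem_KS_iff.mpr ⟨hymem.1, hymem.2.1, hymem.2.2.1, fun k hk => not_not.mp hk⟩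
      have hTnonempty : T.Nonempty := by
        by_contra hTe
        rw [Set.not_nonempty_iff_eq_empty] at hTe
        apply hy0
        have h2 : y.2 = 0 := funext fun k =>
          hymem.2.2.2 k (by rw [hTe]; exact Set.notMem_empty k)
        have h1 : y.1 = 0 := hymem.2.2.1
        exact Prod.ext_iff.mpr ⟨by simpa using h1, by simpa using h2⟩
      obtain ⟨k₀, hk₀⟩ := hTnonempty
      by_cases hdT : 1 < Module.finrank ℝ ↥(stab ψ ⊓ gS T)
      · have hblockT : Su2Block ψ T := by
          refine ⟨hdT, fun T' hT' => ?_⟩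
          have hbot : stab ψ ⊓ gS T' = ⊥ := by
            by_contra hne'
            exact hTmin T' ⟨hT'.subset.trans hTsub, hne'⟩ hT'
          rw [hbot]
          exact finrank_bot ℝ (GV n)
        have hk₀B : k₀ ∈ B := ⟨T, hblockT, hk₀⟩
        exact (hSsub ((hTsub hk₀).1)) hk₀B
      · push_neg at hdT
        have hmain : ∀ wv, wv ∈ stab ψ ⊓ gS S → ∀ k ∈ T, ∃ ρ : ℝ, wv.2 k = ρ • y.2 k := by
          intro wv hwv k hk
          have hwvmem := mem_KS_iff.mp hwv
          have hwvstab : wv ∈ stab ψ := mem_stab_iff.mpr ⟨hwvmem.1, hwvmem.2.1⟩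
          have hbr : gBracket y wv ∈ stab ψ ⊓ gS T := by
            refine bracket_mem_KS hystab hwvstab fun k' hk' => ?_
            rw [hymem.2.2.2 k' hk']
            simp
          obtain ⟨r, hr⟩ := line_of_finrank_le_one hdT hy hy0 hbr
          have hrk := congrArg (fun z : GV n => z.2 k₀) hr
          simp only [Prod.smul_snd, Pi.smul_apply] at hrk
          rw [gBracket_snd] at hrk
          have htr := congrArg (fun M => (M * (y.2 k₀)).trace) hrk
          simp only [Matrix.smul_mul, Matrix.trace_smul] at htr
          rw [trace_comm_left (y.2 k₀) (wv.2 k₀)] at htr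
          have hr0 : r = 0 := by
            rcases smul_eq_zero.mp htr.symm with h1 | h2
            · exact h1
            · exact absurd h2 (su2_trace_sq_ne_zero (hymem.1 k₀) (hsupp k₀ hk₀))
          rw [hr0, zero_smul] at hr
          have hck := congrFun (congrArg Prod.snd hr) k
          simp only [Prod.snd_zero, Pi.zero_apply] at hck
          rw [gBracket_snd] at hck
          exact su2_cent (hwvmem.1 k) (hymem.1 k) (sub_eq_zero.mp hck).symm (hsupp k hk)
        set g3 := gBracket z₁ x with hg3def
        have hz₁stab : z₁ ∈ stab ψ := (Submodule.mem_inf.mp hz₁S).1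
        have hg3S : g3 ∈ stab ψ ⊓ gS (S \ T) := by
          refine bracket_mem_KS hz₁stab hxstab fun k hk => ?_
          by_cases hkS : k ∈ S
          · have hkT : k ∈ T := by
              by_contra hkT
              exact hk ⟨hkS, hkT⟩
            obtain ⟨ρa, hρa⟩ := hmain z₁ hz₁S k hkT
            obtain ⟨ρb, hρb⟩ := hmain x hxS k hkT
            rw [hρa, hρb, Matrix.smul_mul, Matrix.mul_smul, Matrix.smul_mul, Matrix.mul_smul,
              smul_smul, smul_smul, mul_comm ρb ρa, sub_self]
          · rw [hxmem.2.2.2 k hkS]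
            simp
        have hg3j : g3.2 j ≠ 0 := by
          rw [hg3def, gBracket_snd, hz₁j]
          exact su2_perp_bracket (su2_bracket_mem hA hu₁2) hu₁2 (trace_comm_right A u₁)
            hABind.left_ne_zero hxj
        have hSTss : S \ T ⊂ S := by
          refine ⟨Set.diff_subset, fun hsub => ?_⟩
          exact (hsub ((hTsub hk₀).1)).2 hk₀
        exact hSmin (S \ T) ⟨Set.diff_subset.trans hSsub, g3, hg3S, hg3j⟩ hSTss
    · exact hSmin S' ⟨hss.subset.trans hSsub, y', hy', hyj⟩ hss
  have hblockS : Su2Block ψ S := by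
    refine ⟨hrankS, fun S' h => ?_⟩
    rw [hC2 S' h]
    exact finrank_bot ℝ (GV n)
  have hjS : j ∈ S := by
    by_contra hjs
    exact hxj (hxmem.2.2.2 j hjs)
  exact (hSsub hjS) ⟨S, hblockS, hjS⟩

end Aux8
/-- `dim (K_ψ ∩ ḡ_B) ≤ n − b`, where `B` is the union of all `su(2)` blocks
for `ψ` and `b` is the number of qubits in `B`. -/
theorem stmt8 {n : ℕ} (hn : 1 ≤ n) (ψ : QState n) (hψ : ψ ≠ 0) :
    Module.finrank ℝ ↥(stab ψ ⊓ gBar (blockUnion ψ)) ≤ n - (blockUnion ψ).ncard := by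
  classical
  set B := blockUnion ψ with hBdef
  set K := stab ψ ⊓ gBar B with hKdef
  haveI : Fintype ↥(Bᶜ) := Fintype.ofFinite _
  set Mk : Fin n → Submodule ℝ (Matrix (Fin 2) (Fin 2) ℂ) := fun k => K.map (Pj k) with hMkdef
  set f : ↥K →ₗ[ℝ] ((k : ↥(Bᶜ)) → ↥(Mk k.1)) :=
    LinearMap.pi (fun k : ↥(Bᶜ) => LinearMap.codRestrict (Mk k.1) ((Pj k.1).comp K.subtype)
      (fun z => Submodule.mem_map_of_mem z.2)) with hfdef
  have hinj : Function.Injective f := by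
    rw [← LinearMap.ker_eq_bot, Submodule.eq_bot_iff]
    intro z hz
    rw [LinearMap.mem_ker] at hz
    have hcomp : ∀ k : ↥(Bᶜ), (z : GV n).2 k.1 = 0 := by
      intro k
      have h1 := congrArg Subtype.val (congrFun hz k)
      simpa [hfdef, LinearMap.pi_apply, LinearMap.codRestrict_apply, LinearMap.comp_apply,
        Aux8.Pj_apply] using h1
    have hz2 : (z : GV n).2 = 0 := by
      funext k
      by_cases hk : k ∈ B
      · exact (Aux8.mem_K_iff.mp z.2).2.2 k hk
      · exact hcomp ⟨k, hk⟩
    have hz1 : (z : GV n).1 = 0 :=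
      Aux8.stab_fst_eq_zero hψ (Aux8.mem_K_iff.mp z.2).2.1 hz2
    exact Subtype.ext (Prod.ext_iff.mpr ⟨by simpa using hz1, by simpa using hz2⟩)
  have hle := LinearMap.finrank_le_finrank_of_injective hinj
  rw [Module.finrank_pi_fintype ℝ] at hle
  have hbound : ∀ k : ↥(Bᶜ), Module.finrank ℝ ↥(Mk k.1) ≤ 1 := fun k =>
    Aux8.per_qubit ψ hψ k.1 k.2
  have hsum : ∑ k : ↥(Bᶜ), Module.finrank ℝ ↥(Mk k.1) ≤ Fintype.card ↥(Bᶜ) := by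
    have h2 := Finset.sum_le_sum (fun (k : ↥(Bᶜ)) (_ : k ∈ Finset.univ) => hbound k)
    simpa using h2
  have hcard : Fintype.card ↥(Bᶜ) = n - B.ncard := by
    have h1 : B.ncard + (Bᶜ).ncard = n := by
      have h0 := Set.ncard_add_ncard_compl B
      simpa [Nat.card_eq_fintype_card] using h0
    have h2 : Fintype.card ↥(Bᶜ) = (Bᶜ).ncard := by
      rw [← Nat.card_coe_set_eq, Nat.card_eq_fintype_card]
    omega
  exact hle.trans (hsum.trans_eq hcard)
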